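/- Under the same hypothesis that ‖z − α x^(i₀)‖² + 2σ² log(N/η) ≤ ‖z − α x^(j)‖² for all j ≠ i₀, the empirical score satisfies ‖s_⋆(z) − (−z + α x^(i₀))/σ²‖ ≤ (α η / σ²) · max_{j} ‖x^(j) − x^(i₀)‖. -/

import Mathlib

open Finset

noncomputable def smWeight {d N : ℕ} (x : Fin N → EuclideanSpace ℝ (Fin d))
    (α σ : ℝ) (z : EuclideanSpace ℝ (Fin d)) (i : Fin N) : ℝ :=
  Real.exp (-‖z - α • x i‖ ^ 2 / (2 * σ ^ 2)) /
    ∑ j, Real.exp (-‖z - α • x j‖ ^ 2 / (2 * σ ^ 2))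

noncomputable def empiricalScore {d N : ℕ} (x : Fin N → EuclideanSpace ℝ (Fin d))
    (α σ : ℝ) (z : EuclideanSpace ℝ (Fin d)) : EuclideanSpace ℝ (Fin d) :=
  (σ ^ 2)⁻¹ • (-z + α • ∑ i, smWeight x α σ z i • x i)

/-- Under the margin condition, the empirical score approximately points to the nearest
shell center: `‖s_⋆(z) − (−z + α x^(i₀))/σ²‖ ≤ (α η / σ²) · max_j ‖x^(j) − x^(i₀)‖`. -/
theorem empiricalScore_collapse {d N : ℕ} (x : Fin N → EuclideanSpace ℝ (Fin d))
    (α σ : ℝ) (hα : 0 < α) (hσ : 0 < σ) (z : EuclideanSpace ℝ (Fin d))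
    (η : ℝ) (hη0 : 0 < η) (hη1 : η < 1) (i₀ : Fin N)
    (hmargin : ∀ j : Fin N, j ≠ i₀ →
      ‖z - α • x i₀‖ ^ 2 + 2 * σ ^ 2 * Real.log (N / η) ≤ ‖z - α • x j‖ ^ 2) :
    ‖empiricalScore x α σ z - (σ ^ 2)⁻¹ • (-z + α • x i₀)‖
      ≤ α * η / σ ^ 2 * (univ.sup' ⟨i₀, mem_univ i₀⟩ fun j => ‖x j - x i₀‖) := by
  have hN : 0 < N := Fin.pos i₀
  have hNR : (0:ℝ) < N := by exact_mod_cast hN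
  set E : Fin N → ℝ := fun i => Real.exp (-‖z - α • x i‖ ^ 2 / (2 * σ ^ 2)) with hE
  have hEpos : ∀ i, 0 < E i := fun i => Real.exp_pos _
  set S : ℝ := ∑ j, E j with hSdef
  have hS : 0 < S := Finset.sum_pos (fun i _ => hEpos i) ⟨i₀, mem_univ i₀⟩
  set w : Fin N → ℝ := fun i => smWeight x α σ z i with hw
  have hwdef : ∀ i, w i = E i / S := fun i => rfl
  have hwpos : ∀ i, 0 < w i := fun i => div_pos (hEpos i) hS
  have hsum : ∑ i, w i = 1 := by
    simp only [hwdef, ← Finset.sum_div]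
    exact div_self hS.ne'
  set M : ℝ := univ.sup' ⟨i₀, mem_univ i₀⟩ fun j => ‖x j - x i₀‖ with hM
  have hMle : ∀ j, ‖x j - x i₀‖ ≤ M := fun j => le_sup' (fun j => ‖x j - x i₀‖) (mem_univ j)
  have hM0 : 0 ≤ M := le_trans (norm_nonneg _) (hMle i₀)
  -- key bound on weights
  have hwb : ∀ j, j ≠ i₀ → w j ≤ η / N := by
    intro j hj
    have hlog : -‖z - α • x j‖ ^ 2 / (2 * σ ^ 2) ≤
        -‖z - α • x i₀‖ ^ 2 / (2 * σ ^ 2) - Real.log (N / η) := by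
      have h := hmargin j hj
      have h2 : 0 < 2 * σ ^ 2 := by positivity
      rw [div_sub' h2.ne', div_le_div_iff₀ h2 h2]
      nlinarith
    have hEj : E j ≤ E i₀ * (η / N) := by
      have := Real.exp_le_exp.mpr hlog
      rw [Real.exp_sub, Real.exp_log (by positivity)] at this
      calc E j ≤ E i₀ / (N / η) := this
        _ = E i₀ * (η / N) := by field_simp
    have hEiS : E i₀ ≤ S := Finset.single_le_sum (fun i _ => (hEpos i).le) (mem_univ i₀)
    rw [hwdef, div_le_iff₀ hS]
    calc E j ≤ E i₀ * (η / N) := hEj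
      _ ≤ S * (η / N) := by
          apply mul_le_mul_of_nonneg_right hEiS (by positivity)
      _ = η / N * S := by ring
  -- rewrite the difference
  have h1 : ∑ i, w i • (x i - x i₀) = (∑ i, w i • x i) - x i₀ := by
    simp only [smul_sub, Finset.sum_sub_distrib, ← Finset.sum_smul, hsum, one_smul]
  have key : empiricalScore x α σ z - (σ ^ 2)⁻¹ • (-z + α • x i₀)
      = (σ ^ 2)⁻¹ • (α • ∑ i, w i • (x i - x i₀)) := by
    rw [h1, empiricalScore]
    module
  rw [key]
  have hnorm : ‖∑ i, w i • (x i - x i₀)‖ ≤ η * M := by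
    calc ‖∑ i, w i • (x i - x i₀)‖ ≤ ∑ i, ‖w i • (x i - x i₀)‖ := norm_sum_le _ _
      _ = ∑ i, w i * ‖x i - x i₀‖ := by
          refine Finset.sum_congr rfl fun i _ => ?_
          rw [norm_smul, Real.norm_eq_abs, abs_of_pos (hwpos i)]
      _ = ∑ i ∈ univ.erase i₀, w i * ‖x i - x i₀‖ := by
          rw [Finset.sum_erase]
          simp
      _ ≤ ∑ _i ∈ univ.erase i₀, η / N * M := by
          refine Finset.sum_le_sum fun i hi => ?_
          exact mul_le_mul (hwb i (Finset.mem_erase.mp hi).1) (hMle i) (norm_nonneg _)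
            (by positivity)
      _ = ((univ.erase i₀).card : ℝ) * (η / N * M) := by rw [Finset.sum_const, nsmul_eq_mul]
      _ ≤ (N : ℝ) * (η / N * M) := by
          apply mul_le_mul_of_nonneg_right _ (by positivity)
          have : (univ.erase i₀).card ≤ N := by
            simpa using Finset.card_le_card (Finset.erase_subset _ _)
          exact_mod_cast this
      _ = η * M := by field_simp
  rw [norm_smul, norm_smul, Real.norm_eq_abs, Real.norm_eq_abs,
    abs_of_pos (by positivity : (0:ℝ) < (σ ^ 2)⁻¹), abs_of_pos hα]
  calc (σ ^ 2)⁻¹ * (α * ‖∑ i, w i • (x i - x i₀)‖)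
      ≤ (σ ^ 2)⁻¹ * (α * (η * M)) := by
        apply mul_le_mul_of_nonneg_left _ (by positivity)
        exact mul_le_mul_of_nonneg_left hnorm hα.le
    _ = α * η / σ ^ 2 * M := by ring
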